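/- For even n = dim V and the spin representation c_ζ of Cl(V_ℂ, ζβ) on S = ℂ^{N|N}, the supertrace satisfies STr(e^{inπ/4} c_ζ(γ)) = (2ζ)^{n/2}, where γ = a_1⋯a_n is the product of an oriented orthonormal basis, and STr(c_ζ(a_I)) = 0 for every proper subset I ⊊ {1,…,n}. -/

import Mathlib

noncomputable section

/-- The 2×2 matrix `c_ζ(a_1) = [[0,ζ],[1,0]]`. -/
def matA (ζ : ℂ) : Matrix (Fin 2) (Fin 2) ℂ := !![0, ζ; 1, 0]

/-- The 2×2 matrix `c_ζ(a_2) = [[0,iζ],[−i,0]]`. -/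
def matB (ζ : ℂ) : Matrix (Fin 2) (Fin 2) ℂ := !![0, Complex.I * ζ; -Complex.I, 0]

/-- The 2×2 chirality sign `diag(1,−1)` used to form graded tensor products. -/
def matK : Matrix (Fin 2) (Fin 2) ℂ := !![1, 0; 0, -1]

/-- The spin module `S = (ℂ²)^{⊗k}`, with index set `Fin k → Fin 2`; a basis index is
even or odd according to the parity of the number of `1` entries. -/
abbrev SpinIx (k : ℕ) := Fin k → Fin 2

/-- The spin representation of the generators: `c_ζ(a_i)` is the (graded) tensor product
`K ⊗ ⋯ ⊗ K ⊗ M ⊗ 1 ⊗ ⋯ ⊗ 1` with `M = A` (resp. `M = B`) in slot `i/2` when `i` is even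
(resp. odd), written entrywise. -/
def cGen (k : ℕ) (ζ : ℂ) (i : Fin (2 * k)) : Matrix (SpinIx k) (SpinIx k) ℂ :=
  Matrix.of fun s t => ∏ m : Fin k,
    if (m : ℕ) < (i : ℕ) / 2 then matK (s m) (t m)
    else if (m : ℕ) = (i : ℕ) / 2 then
      (if (i : ℕ) % 2 = 0 then matA ζ else matB ζ) (s m) (t m)
    else (1 : Matrix (Fin 2) (Fin 2) ℂ) (s m) (t m)

/-- The linear extension of the spin representation to `V_ℂ`. -/
def cVec (k : ℕ) (ζ : ℂ) (v : Fin (2 * k) → ℂ) : Matrix (SpinIx k) (SpinIx k) ℂ :=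
  ∑ i, v i • cGen k ζ i

/-- The ordered products `c_ζ(a_I) = c_ζ(a_{i_1}) ⋯ c_ζ(a_{i_k})`, `I = {i_1 < … < i_k}`. -/
def cProd (k : ℕ) (ζ : ℂ) (I : Finset (Fin (2 * k))) : Matrix (SpinIx k) (SpinIx k) ℂ :=
  ((I.sort (· ≤ ·)).map (cGen k ζ)).prod

/-- The supertrace on `End(S)`, `S = ℂ^{N|N}`. -/
def strace (k : ℕ) (M : Matrix (SpinIx k) (SpinIx k) ℂ) : ℂ :=
  ∑ s : SpinIx k, (-1 : ℂ) ^ (∑ m, ((s m : ℕ))) * M s s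

open Finset Matrix

namespace SpinAux

/-- The 2×2 factor of `cGen` at slot `m`. -/
def fac (ζ : ℂ) (k : ℕ) (m : Fin k) (i : Fin (2 * k)) : Matrix (Fin 2) (Fin 2) ℂ :=
  if (m : ℕ) < (i : ℕ) / 2 then matK
  else if (m : ℕ) = (i : ℕ) / 2 then (if (i : ℕ) % 2 = 0 then matA ζ else matB ζ)
  else 1

lemma cGen_apply (k : ℕ) (ζ : ℂ) (i : Fin (2 * k)) (s t : SpinIx k) :
    cGen k ζ i s t = ∏ m, fac ζ k m i (s m) (t m) := by
  unfold cGen fac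
  rw [Matrix.of_apply]
  refine Finset.prod_congr rfl fun m _ => ?_
  split_ifs <;> rfl

lemma prod_entry (k : ℕ) (ζ : ℂ) (L : List (Fin (2 * k))) (s t : SpinIx k) :
    ((L.map (cGen k ζ)).prod) s t = ∏ m, ((L.map (fac ζ k m)).prod) (s m) (t m) := by
  induction L generalizing s t with
  | nil =>
    simp only [List.map_nil, List.prod_nil, Matrix.one_apply]
    by_cases h : s = t
    · simp [h]
    · obtain ⟨m, hm⟩ := Function.ne_iff.mp h
      rw [if_neg h]
      exact (Finset.prod_eq_zero (mem_univ m) (by simp [hm])).symm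
  | cons i L ih =>
    simp only [List.map_cons, List.prod_cons, Matrix.mul_apply]
    calc ∑ u : SpinIx k, cGen k ζ i s u * ((L.map (cGen k ζ)).prod u t)
        = ∑ u : SpinIx k, ∏ m, (fac ζ k m i (s m) (u m) *
            ((L.map (fac ζ k m)).prod (u m) (t m))) := by
          refine Finset.sum_congr rfl fun u _ => ?_
          rw [cGen_apply, ih, ← Finset.prod_mul_distrib]
      _ = ∏ m, ∑ x : Fin 2, fac ζ k m i (s m) x * ((L.map (fac ζ k m)).prod x (t m)) := by
          rw [Finset.prod_univ_sum, Fintype.piFinset_univ]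



/-- 2×2 supertrace. -/
def str2 (P : Matrix (Fin 2) (Fin 2) ℂ) : ℂ := P 0 0 - P 1 1

lemma strace_eq (k : ℕ) (ζ : ℂ) (L : List (Fin (2 * k))) :
    strace k ((L.map (cGen k ζ)).prod) = ∏ m, str2 ((L.map (fac ζ k m)).prod) := by
  unfold strace
  calc ∑ s : SpinIx k, (-1:ℂ)^(∑ m, ((s m : ℕ))) * ((L.map (cGen k ζ)).prod s s)
      = ∑ s : SpinIx k, ∏ m, ((-1:ℂ)^((s m : ℕ)) *
          ((L.map (fac ζ k m)).prod (s m) (s m))) := by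
        refine Finset.sum_congr rfl fun s _ => ?_
        rw [prod_entry, ← Finset.prod_pow_eq_pow_sum, ← Finset.prod_mul_distrib]
    _ = ∏ m, ∑ x : Fin 2, (-1:ℂ)^((x:ℕ)) * ((L.map (fac ζ k m)).prod x x) := by
        rw [Finset.prod_univ_sum, Fintype.piFinset_univ]
    _ = ∏ m, str2 ((L.map (fac ζ k m)).prod) := by
        refine Finset.prod_congr rfl fun m _ => ?_
        rw [Fin.sum_univ_two, str2]
        norm_num
        ring


lemma slot_prod (k : ℕ) (ζ : ℂ) (m : Fin k) (L : List (Fin (2 * k)))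
    (hL : L.Pairwise (· < ·)) :
    (L.map (fac ζ k m)).prod =
      (if 2*(m:ℕ) ∈ L.map Fin.val then matA ζ else 1) *
      (if 2*(m:ℕ)+1 ∈ L.map Fin.val then matB ζ else 1) *
      matK ^ (L.countP (fun i : Fin (2*k) => decide (2*(m:ℕ)+2 ≤ (i:ℕ)))) := by
  induction L with
  | nil => simp
  | cons i L ih =>
    obtain ⟨hall, hL'⟩ := List.pairwise_cons.mp hL
    have hlt : ∀ j ∈ L, (i:ℕ) < (j:ℕ) := fun j hj => hall j hj
    have key := ih hL'
    simp only [List.map_cons, List.prod_cons]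
    rcases Nat.lt_or_ge (i:ℕ) (2*(m:ℕ)) with h1 | h1
    · -- factor 1
      have hf : fac ζ k m i = 1 := by
        unfold fac; split_ifs <;> first | rfl | omega
      have hne : ¬ (2*(m:ℕ) = (i:ℕ)) := by omega
      have hne' : ¬ (2*(m:ℕ)+1 = (i:ℕ)) := by omega
      have hcp : ¬ (2*(m:ℕ)+2 ≤ (i:ℕ)) := by omega
      have hcnt : (i :: L).countP (fun j : Fin (2*k) => decide (2*(m:ℕ)+2 ≤ (j:ℕ)))
          = L.countP (fun j : Fin (2*k) => decide (2*(m:ℕ)+2 ≤ (j:ℕ))) := by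
        simp [List.countP_cons, hcp]
      have eA : 2*(m:ℕ) ∈ ((i:ℕ) :: L.map Fin.val) ↔ 2*(m:ℕ) ∈ L.map Fin.val := by
        simp [List.mem_cons, hne]
      have eB : 2*(m:ℕ)+1 ∈ ((i:ℕ) :: L.map Fin.val) ↔ 2*(m:ℕ)+1 ∈ L.map Fin.val := by
        simp [List.mem_cons, hne']
      rw [hf, one_mul, key, hcnt, if_congr eA rfl rfl, if_congr eB rfl rfl]
    · rcases Nat.lt_or_ge (2*(m:ℕ)+1) (i:ℕ) with h2 | h2
      · -- factor K
        have hf : fac ζ k m i = matK := by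
          unfold fac; split_ifs <;> first | rfl | omega
        have hnA' : 2*(m:ℕ) ∉ L.map Fin.val := by
          simp only [List.mem_map]
          rintro ⟨j, hj, e⟩
          have := hlt j hj; omega
        have hnB' : 2*(m:ℕ)+1 ∉ L.map Fin.val := by
          simp only [List.mem_map]
          rintro ⟨j, hj, e⟩
          have := hlt j hj; omega
        have nAc : ¬ (2*(m:ℕ) ∈ ((i:ℕ) :: L.map Fin.val)) := by
          simp only [List.mem_cons]
          rintro (h | h)
          · omega
          · exact hnA' h
        have nBc : ¬ (2*(m:ℕ)+1 ∈ ((i:ℕ) :: L.map Fin.val)) := by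
          simp only [List.mem_cons]
          rintro (h | h)
          · omega
          · exact hnB' h
        have hcp : (2*(m:ℕ)+2 ≤ (i:ℕ)) := by omega
        have hcnt : (i :: L).countP (fun j : Fin (2*k) => decide (2*(m:ℕ)+2 ≤ (j:ℕ)))
            = L.countP (fun j : Fin (2*k) => decide (2*(m:ℕ)+2 ≤ (j:ℕ))) + 1 := by
          simp [List.countP_cons, hcp]
        rw [hf, key, hcnt, if_neg nAc, if_neg nBc, if_neg hnA', if_neg hnB', pow_succ']
        simp [mul_assoc]
      · rcases Nat.lt_or_ge (i:ℕ) (2*(m:ℕ)+1) with h3 | h3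
        · -- i = 2m : factor A
          have hi : (i:ℕ) = 2*(m:ℕ) := by omega
          have hf : fac ζ k m i = matA ζ := by
            unfold fac; split_ifs <;> first | rfl | omega
          have hnA' : 2*(m:ℕ) ∉ L.map Fin.val := by
            simp only [List.mem_map]
            rintro ⟨j, hj, e⟩
            have := hlt j hj; omega
          have memA : 2*(m:ℕ) ∈ ((i:ℕ) :: L.map Fin.val) :=
            List.mem_cons.mpr (Or.inl (by omega))
          have hne' : ¬ (2*(m:ℕ)+1 = (i:ℕ)) := by omega
          have eB : 2*(m:ℕ)+1 ∈ ((i:ℕ) :: L.map Fin.val) ↔ 2*(m:ℕ)+1 ∈ L.map Fin.val := by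
            simp [List.mem_cons, hne']
          have hcp : ¬ (2*(m:ℕ)+2 ≤ (i:ℕ)) := by omega
          have hcnt : (i :: L).countP (fun j : Fin (2*k) => decide (2*(m:ℕ)+2 ≤ (j:ℕ)))
              = L.countP (fun j : Fin (2*k) => decide (2*(m:ℕ)+2 ≤ (j:ℕ))) := by
            simp [List.countP_cons, hcp]
          rw [hf, key, hcnt, if_pos memA, if_neg hnA', if_congr eB rfl rfl, one_mul,
            mul_assoc]
        · -- i = 2m+1 : factor B
          have hi : (i:ℕ) = 2*(m:ℕ)+1 := by omega
          have hf : fac ζ k m i = matB ζ := by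
            unfold fac; split_ifs <;> first | rfl | omega
          have hnA' : 2*(m:ℕ) ∉ L.map Fin.val := by
            simp only [List.mem_map]
            rintro ⟨j, hj, e⟩
            have := hlt j hj; omega
          have hnB' : 2*(m:ℕ)+1 ∉ L.map Fin.val := by
            simp only [List.mem_map]
            rintro ⟨j, hj, e⟩
            have := hlt j hj; omega
          have nAc : ¬ (2*(m:ℕ) ∈ ((i:ℕ) :: L.map Fin.val)) := by
            simp only [List.mem_cons]
            rintro (h | h)
            · omega
            · exact hnA' h
          have memB : 2*(m:ℕ)+1 ∈ ((i:ℕ) :: L.map Fin.val) :=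
            List.mem_cons.mpr (Or.inl (by omega))
          have hcp : ¬ (2*(m:ℕ)+2 ≤ (i:ℕ)) := by omega
          have hcnt : (i :: L).countP (fun j : Fin (2*k) => decide (2*(m:ℕ)+2 ≤ (j:ℕ)))
              = L.countP (fun j : Fin (2*k) => decide (2*(m:ℕ)+2 ≤ (j:ℕ))) := by
            simp [List.countP_cons, hcp]
          rw [hf, key, hcnt, if_neg nAc, if_pos memB, if_neg hnA', if_neg hnB']
          simp [mul_assoc]



lemma matK_sq : matK * matK = 1 := by
  ext i j
  fin_cases i <;> fin_cases j <;>
    simp [matK, Matrix.mul_apply, Fin.sum_univ_two, Matrix.one_apply]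

lemma matK_pow_even {j : ℕ} (h : j % 2 = 0) : matK ^ j = 1 := by
  obtain ⟨t, rfl⟩ : ∃ t, j = 2 * t := ⟨j / 2, by omega⟩
  rw [pow_mul, pow_two, matK_sq, one_pow]

lemma str2_one : str2 1 = 0 := by simp [str2, Matrix.one_apply]

lemma str2_A (ζ : ℂ) : str2 (matA ζ) = 0 := by simp [str2, matA]

lemma str2_B (ζ : ℂ) : str2 (matB ζ) = 0 := by simp [str2, matB]

lemma str2_AB (ζ : ℂ) : str2 (matA ζ * matB ζ) = -2 * Complex.I * ζ := by
  simp [str2, matA, matB, Matrix.mul_apply, Fin.sum_univ_two]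
  ring

lemma countP_sort {α : Type*} [LinearOrder α] (I : Finset α) (p : α → Prop)
    [DecidablePred p] :
    (I.sort (· ≤ ·)).countP (fun a => decide (p a)) = (I.filter p).card := by
  rw [← Multiset.coe_countP, Finset.sort_eq]
  simp [Multiset.countP_eq_card_filter, Finset.card, Finset.filter_val]

lemma card_ge (n a : ℕ) :
    (Finset.univ.filter (fun i : Fin n => a ≤ (i : ℕ))).card = n - a := by
  rcases Nat.lt_or_ge a n with h | h
  · have : NeZero n := ⟨by omega⟩
    have e : (Finset.univ.filter (fun i : Fin n => a ≤ (i : ℕ)))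
        = Finset.Ici (⟨a, h⟩ : Fin n) := by
      ext i
      simp [Fin.le_def]
    rw [e, Fin.card_Ici]
  · have e : (Finset.univ.filter (fun i : Fin n => a ≤ (i : ℕ))) = ∅ := by
      ext i
      simp only [Finset.mem_filter, Finset.mem_univ, true_and, Finset.notMem_empty,
        iff_false]
      have := i.isLt
      omega
    rw [e, Finset.card_empty]
    omega

lemma strace_smul (k : ℕ) (c : ℂ) (M : Matrix (SpinIx k) (SpinIx k) ℂ) :
    strace k (c • M) = c * strace k M := by
  simp [strace, Finset.mul_sum, Matrix.smul_apply, smul_eq_mul]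
  exact Finset.sum_congr rfl fun s _ => by ring

end SpinAux

open SpinAux


/-- For even `n = dim V = 2k` and the spin representation `c_ζ` of
`Cl(V_ℂ, ζβ)` on `S = ℂ^{N|N}` (`N = 2^{k−1}`), the supertrace satisfies
`STr(e^{inπ/4} c_ζ(γ)) = (2ζ)^{n/2}` for `γ = a_1 ⋯ a_n` the product of the oriented
orthonormal basis, and `STr(c_ζ(a_I)) = 0` for every proper subset `I ⊊ {1,…,n}`. -/
theorem spin_supertrace (k : ℕ) (ζ : ℂ) (hζ : ζ ≠ 0) :
    strace k (Complex.exp (Complex.I * (2 * k : ℂ) * (Real.pi : ℂ) / 4) •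
        cProd k ζ Finset.univ) = (2 * ζ) ^ k ∧
      ∀ I : Finset (Fin (2 * k)), I ≠ Finset.univ → strace k (cProd k ζ I) = 0 := by
  constructor
  · rw [strace_smul]
    have h1 : strace k (cProd k ζ Finset.univ) = (-2 * Complex.I * ζ) ^ k := by
      rw [show cProd k ζ Finset.univ
          = ((Finset.univ.sort (· ≤ ·)).map (cGen k ζ)).prod from rfl, strace_eq]
      have hs : ∀ m : Fin k,
          str2 (((Finset.univ.sort (· ≤ ·) : List (Fin (2*k))).map (fac ζ k m)).prod)
            = -2 * Complex.I * ζ := by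
        intro m
        rw [slot_prod _ _ _ _ (Finset.sortedLT_sort _).pairwise]
        have hmk := m.isLt
        have hm2 : 2*(m:ℕ) < 2*k := by omega
        have hm21 : 2*(m:ℕ)+1 < 2*k := by omega
        have memA : 2*(m:ℕ) ∈
            (Finset.univ.sort (· ≤ ·) : List (Fin (2*k))).map Fin.val :=
          List.mem_map.mpr ⟨⟨2*(m:ℕ), hm2⟩,
            (Finset.mem_sort _).mpr (Finset.mem_univ _), rfl⟩
        have memB : 2*(m:ℕ)+1 ∈
            (Finset.univ.sort (· ≤ ·) : List (Fin (2*k))).map Fin.val :=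
          List.mem_map.mpr ⟨⟨2*(m:ℕ)+1, hm21⟩,
            (Finset.mem_sort _).mpr (Finset.mem_univ _), rfl⟩
        have hcnt : ((Finset.univ.sort (· ≤ ·) : List (Fin (2*k))).countP
            (fun i : Fin (2*k) => decide (2*(m:ℕ)+2 ≤ (i:ℕ)))) = 2*k - (2*(m:ℕ)+2) := by
          rw [countP_sort, card_ge]
        have heven : (2*k - (2*(m:ℕ)+2)) % 2 = 0 := by omega
        rw [if_pos memA, if_pos memB, hcnt, matK_pow_even heven, mul_one, str2_AB]
      rw [Finset.prod_congr rfl fun m _ => hs m, Finset.prod_const, Finset.card_univ,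
        Fintype.card_fin]
    have hexp : Complex.exp (Complex.I * (2 * k : ℂ) * (Real.pi : ℂ) / 4)
        = Complex.I ^ k := by
      have e1 : Complex.I * (2 * k : ℂ) * (Real.pi : ℂ) / 4
          = (k : ℕ) * (((Real.pi / 2 : ℝ) : ℂ) * Complex.I) := by
        push_cast
        ring
      rw [e1, Complex.exp_nat_mul, Complex.exp_mul_I, ← Complex.ofReal_cos,
        ← Complex.ofReal_sin, Real.cos_pi_div_two, Real.sin_pi_div_two]
      simp
    rw [h1, hexp, ← mul_pow]
    congr 1
    have e2 : Complex.I * (-2 * Complex.I * ζ)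
        = -2 * (Complex.I * Complex.I) * ζ := by ring
    rw [e2, Complex.I_mul_I]
    ring
  · intro I hI
    have hne : Iᶜ.Nonempty := by
      rw [Finset.nonempty_iff_ne_empty]
      intro h
      exact hI (by rwa [Finset.compl_eq_empty_iff] at h)
    set i₀ := Iᶜ.max' hne with hi₀def
    have hi₀c : i₀ ∈ Iᶜ := Finset.max'_mem _ _
    have hi₀I : i₀ ∉ I := Finset.mem_compl.mp hi₀c
    have htail : ∀ x : Fin (2*k), (i₀:ℕ) < (x:ℕ) → x ∈ I := by
      intro x hx
      by_contra hxI
      have hx2 : x ≤ i₀ := Finset.le_max' _ x (Finset.mem_compl.mpr hxI)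
      have hx3 : (x:ℕ) ≤ (i₀:ℕ) := Fin.le_def.mp hx2
      omega
    have hlt : (i₀:ℕ) < 2*k := i₀.isLt
    have hm0 : (i₀:ℕ)/2 < k := by omega
    set m₀ : Fin k := ⟨(i₀:ℕ)/2, hm0⟩ with hm₀def
    have hm₀v : (m₀:ℕ) = (i₀:ℕ)/2 := rfl
    rw [show cProd k ζ I = ((I.sort (· ≤ ·)).map (cGen k ζ)).prod from rfl, strace_eq]
    apply Finset.prod_eq_zero (Finset.mem_univ m₀)
    rw [slot_prod _ _ _ _ (Finset.sortedLT_sort _).pairwise]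
    have hfe : I.filter (fun i : Fin (2*k) => 2*(m₀:ℕ)+2 ≤ (i:ℕ))
        = Finset.univ.filter (fun i : Fin (2*k) => 2*(m₀:ℕ)+2 ≤ (i:ℕ)) := by
      ext x
      simp only [Finset.mem_filter, Finset.mem_univ, true_and, and_iff_right_iff_imp]
      intro hx
      exact htail x (by omega)
    have hcnt : ((I.sort (· ≤ ·)).countP
        (fun i : Fin (2*k) => decide (2*(m₀:ℕ)+2 ≤ (i:ℕ)))) = 2*k - (2*(m₀:ℕ)+2) := by
      rw [countP_sort, hfe, card_ge]
    have heven : (2*k - (2*(m₀:ℕ)+2)) % 2 = 0 := by omega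
    rw [hcnt, matK_pow_even heven, mul_one]
    rcases Nat.even_or_odd (i₀:ℕ) with he | ho
    · have hv : (i₀:ℕ) = 2*(m₀:ℕ) := by
        obtain ⟨t, ht⟩ := he
        omega
      have nA : 2*(m₀:ℕ) ∉ (I.sort (· ≤ ·)).map Fin.val := by
        intro h
        obtain ⟨x, hx, e⟩ := List.mem_map.mp h
        have hxI : x ∈ I := (Finset.mem_sort _).mp hx
        have hxe : x = i₀ := Fin.ext (by omega)
        exact hi₀I (hxe ▸ hxI)
      have memB : 2*(m₀:ℕ)+1 ∈ (I.sort (· ≤ ·)).map Fin.val := by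
        have hlt2 : 2*(m₀:ℕ)+1 < 2*k := by omega
        refine List.mem_map.mpr ⟨⟨2*(m₀:ℕ)+1, hlt2⟩, ?_, rfl⟩
        exact (Finset.mem_sort _).mpr (htail _ (by simpa using by omega))
      rw [if_neg nA, if_pos memB, one_mul, str2_B]
    · have hv : (i₀:ℕ) = 2*(m₀:ℕ)+1 := by
        obtain ⟨t, ht⟩ := ho
        omega
      have nB : 2*(m₀:ℕ)+1 ∉ (I.sort (· ≤ ·)).map Fin.val := by
        intro h
        obtain ⟨x, hx, e⟩ := List.mem_map.mp h
        have hxI : x ∈ I := (Finset.mem_sort _).mp hx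
        have hxe : x = i₀ := Fin.ext (by omega)
        exact hi₀I (hxe ▸ hxI)
      rw [if_neg nB]
      by_cases hA : 2*(m₀:ℕ) ∈ (I.sort (· ≤ ·)).map Fin.val
      · rw [if_pos hA, mul_one, str2_A]
      · rw [if_neg hA, mul_one, str2_one]
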